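/- Let 1/2 < α < 1 and δ ≥ 3α. Then for all 0 ≤ a < b ≤ 1: α·∫_a^b t^{2α−1}(1−t)^δ dt ≤ (b^{2α} − a^{2α})/4 · ((1−a)^δ + (1−b)^δ). -/

import Mathlib

open scoped Real

lemma convF (μ δ : ℝ) (hμ0 : 0 < μ) (hμ1 : μ < 1) (hδ : 3/2 ≤ μ * δ) :
    ConvexOn ℝ (Set.Icc (0:ℝ) 1) (fun y => (1 - y ^ μ) ^ δ) := by
  have hδ1 : 1 ≤ δ := by nlinarith
  have hint : interior (Set.Icc (0:ℝ) 1) = Set.Ioo 0 1 := interior_Icc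
  set f' : ℝ → ℝ := fun y => δ * (1 - y ^ μ) ^ (δ - 1) * (-(μ * y ^ (μ - 1))) with hf'def
  set f'' : ℝ → ℝ := fun y =>
    δ * μ * ((δ - 1) * μ * (1 - y ^ μ) ^ (δ - 2) * (y ^ (μ - 1) * y ^ (μ - 1))
      + (1 - μ) * (1 - y ^ μ) ^ (δ - 1) * y ^ (μ - 2)) with hf''def
  apply convexOn_of_hasDerivWithinAt2_nonneg (f' := f') (f'' := f'') (convex_Icc 0 1)
  · -- continuity
    apply ContinuousOn.rpow_const
    · exact (continuousOn_const.sub (continuousOn_id.rpow_const (fun x _ => Or.inr hμ0.le)))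
    · exact fun x _ => Or.inr (by linarith)
  · rw [hint]
    rintro y ⟨hy0, hy1⟩
    have hyμ : y ^ μ < 1 := Real.rpow_lt_one hy0.le hy1 hμ0
    have h1 : HasDerivAt (fun y : ℝ => 1 - y ^ μ) (-(μ * y ^ (μ - 1))) y := by
      simpa using ((Real.hasDerivAt_rpow_const (p := μ) (Or.inl hy0.ne'))).const_sub 1
    have h2 : HasDerivAt (fun u : ℝ => u ^ δ) (δ * (1 - y ^ μ) ^ (δ - 1)) (1 - y ^ μ) :=
      Real.hasDerivAt_rpow_const (Or.inl (by linarith))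
    exact (h2.comp y h1).hasDerivWithinAt
  · rw [hint]
    rintro y ⟨hy0, hy1⟩
    have hyμ : y ^ μ < 1 := Real.rpow_lt_one hy0.le hy1 hμ0
    have h1 : HasDerivAt (fun y : ℝ => 1 - y ^ μ) (-(μ * y ^ (μ - 1))) y := by
      simpa using ((Real.hasDerivAt_rpow_const (p := μ) (Or.inl hy0.ne'))).const_sub 1
    have h2 : HasDerivAt (fun u : ℝ => u ^ (δ-1)) ((δ-1) * (1 - y ^ μ) ^ (δ - 1 - 1)) (1 - y ^ μ) :=
      Real.hasDerivAt_rpow_const (Or.inl (by linarith))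
    have h3 : HasDerivAt (fun y : ℝ => (1 - y ^ μ) ^ (δ - 1))
        ((δ-1) * (1 - y ^ μ) ^ (δ - 1 - 1) * (-(μ * y ^ (μ - 1)))) y := by
      have h := h2.comp y h1
      exact h
    have h4 : HasDerivAt (fun y : ℝ => y ^ (μ - 1)) ((μ - 1) * y ^ (μ - 1 - 1)) y :=
      Real.hasDerivAt_rpow_const (Or.inl hy0.ne')
    have h5 : HasDerivAt f'
        ((δ * ((δ-1) * (1 - y ^ μ) ^ (δ - 1 - 1) * (-(μ * y ^ (μ - 1)))))
          * (-(μ * y ^ (μ - 1)))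
          + δ * (1 - y ^ μ) ^ (δ - 1) * (-(μ * ((μ - 1) * y ^ (μ - 1 - 1))))) y := by
      have := ((h3.const_mul δ).mul ((h4.const_mul μ).neg))
      exact this.congr_deriv (by simp only [Pi.neg_apply])
    have heq : (δ * ((δ-1) * (1 - y ^ μ) ^ (δ - 1 - 1) * (-(μ * y ^ (μ - 1)))))
          * (-(μ * y ^ (μ - 1)))
          + δ * (1 - y ^ μ) ^ (δ - 1) * (-(μ * ((μ - 1) * y ^ (μ - 1 - 1)))) = f'' y := by
      rw [hf''def]
      have e1 : δ - 1 - 1 = δ - 2 := by ring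
      have e2 : μ - 1 - 1 = μ - 2 := by ring
      rw [e1, e2]; ring
    rw [heq] at h5
    exact h5.hasDerivWithinAt
  · rw [hint]
    rintro y ⟨hy0, hy1⟩
    have hyμ : y ^ μ ≤ 1 := (Real.rpow_lt_one hy0.le hy1 hμ0).le
    have h1 : (0:ℝ) ≤ 1 - y ^ μ := by linarith
    have h2 : (0:ℝ) ≤ y := hy0.le
    have := Real.rpow_nonneg h1 (δ - 2)
    have := Real.rpow_nonneg h1 (δ - 1)
    have := Real.rpow_nonneg h2 (μ - 1)
    have := Real.rpow_nonneg h2 (μ - 2)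
    have hδ1 : (1:ℝ) ≤ δ := by nlinarith
    rw [hf''def]
    dsimp only
    have hdm : (0:ℝ) ≤ δ * μ := by positivity
    refine mul_nonneg hdm (add_nonneg ?_ ?_)
    · exact mul_nonneg (mul_nonneg (mul_nonneg (by linarith) hμ0.le) (Real.rpow_nonneg h1 _))
        (mul_nonneg (Real.rpow_nonneg h2 _) (Real.rpow_nonneg h2 _))
    · exact mul_nonneg (mul_nonneg (by linarith) (Real.rpow_nonneg h1 _)) (Real.rpow_nonneg h2 _)

theorem stmt_13 (α δ a b : ℝ) (hα1 : 1 / 2 < α) (hα2 : α < 1) (hδ : 3 * α ≤ δ)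
    (ha : 0 ≤ a) (hab : a < b) (hb : b ≤ 1) :
    α * ∫ t in a..b, t ^ (2 * α - 1) * (1 - t) ^ δ
      ≤ (b ^ (2 * α) - a ^ (2 * α)) / 4 * ((1 - a) ^ δ + (1 - b) ^ δ) := by
  have hα0 : 0 < α := by linarith
  have h2α : (0:ℝ) < 2 * α := by linarith
  have hδ0 : (0:ℝ) < δ := by linarith
  set μ : ℝ := 1 / (2 * α) with hμdef
  have hμ0 : 0 < μ := by positivity
  have hμ1 : μ < 1 := by rw [hμdef]; rw [div_lt_one h2α]; linarith
  have hμδ : 3/2 ≤ μ * δ := by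
    rw [hμdef]; rw [div_mul_eq_mul_div, le_div_iff₀ h2α]; linarith
  have hconv := convF μ δ hμ0 hμ1 hμδ
  set A : ℝ := a ^ (2 * α) with hAdef
  set B : ℝ := b ^ (2 * α) with hBdef
  have hb0 : 0 < b := lt_of_le_of_lt ha hab
  have hAB : A < B := Real.rpow_lt_rpow ha hab h2α
  have hA0 : 0 ≤ A := Real.rpow_nonneg ha _
  have hB1 : B ≤ 1 := Real.rpow_le_one hb0.le hb h2α.le
  have hBA : (0:ℝ) < B - A := by linarith
  have hμα : 2 * α * μ = 1 := by rw [hμdef]; field_simp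
  have hcomp : ∀ t : ℝ, 0 ≤ t → (t ^ (2 * α)) ^ μ = t := by
    intro t ht
    rw [← Real.rpow_mul ht, hμα, Real.rpow_one]
  set P : ℝ := (1 - a) ^ δ with hPdef
  set Q : ℝ := (1 - b) ^ δ with hQdef
  set d : ℝ := (Q - P) / (B - A) with hddef
  set c : ℝ := P - d * A with hcdef
  have hfA : (1 - A ^ μ) ^ δ = P := by rw [hAdef, hcomp a ha]
  have hfB : (1 - B ^ μ) ^ δ = Q := by rw [hBdef, hcomp b hb0.le]
  -- chord inequality
  have hchord : ∀ y ∈ Set.Icc A B, (1 - y ^ μ) ^ δ ≤ c + d * y := by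
    intro y hy
    have hAm : A ∈ Set.Icc (0:ℝ) 1 := ⟨hA0, by linarith [hy.1, hy.2]⟩
    have hBm : B ∈ Set.Icc (0:ℝ) 1 := ⟨by linarith, hB1⟩
    set l : ℝ := (B - y) / (B - A) with hldef
    have hl0 : 0 ≤ l := div_nonneg (by linarith [hy.2]) hBA.le
    have hl1 : 0 ≤ 1 - l := by
      rw [hldef, sub_nonneg, div_le_one hBA]
      linarith [hy.1]
    have hsum : l + (1 - l) = 1 := by ring
    have hcomb : l • A + (1 - l) • B = y := by
      simp only [smul_eq_mul, hldef]
      field_simp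
      ring
    have hcc := hconv.2 hAm hBm hl0 hl1 hsum
    rw [hcomb] at hcc
    refine hcc.trans (le_of_eq ?_)
    simp only [smul_eq_mul, hfA, hfB, hcdef, hddef, hldef]
    field_simp
    ring
  -- pointwise bound on the integrand
  have hpt : ∀ t ∈ Set.Icc a b,
      t ^ (2 * α - 1) * (1 - t) ^ δ ≤ c * t ^ (2 * α - 1) + d * t ^ (4 * α - 1) := by
    intro t ht
    have ht0 : 0 ≤ t := ha.trans ht.1
    have hmem : t ^ (2 * α) ∈ Set.Icc A B :=
      ⟨Real.rpow_le_rpow ha ht.1 h2α.le, Real.rpow_le_rpow ht0 ht.2 h2α.le⟩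
    have hch := hchord _ hmem
    rw [hcomp t ht0] at hch
    have htp : 0 ≤ t ^ (2 * α - 1) := Real.rpow_nonneg ht0 _
    have hmul := mul_le_mul_of_nonneg_left hch htp
    have hradd : t ^ (2 * α - 1) * t ^ (2 * α) = t ^ (4 * α - 1) := by
      rw [← Real.rpow_add' ht0 (by intro h; nlinarith)]
      norm_num
      ring_nf
    calc t ^ (2 * α - 1) * (1 - t) ^ δ ≤ t ^ (2 * α - 1) * (c + d * t ^ (2 * α)) := hmul
      _ = c * t ^ (2 * α - 1) + d * (t ^ (2 * α - 1) * t ^ (2 * α)) := by ring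
      _ = c * t ^ (2 * α - 1) + d * t ^ (4 * α - 1) := by rw [hradd]
  -- continuity / integrability
  have hcont1 : Continuous fun t : ℝ => t ^ (2 * α - 1) :=
    continuous_iff_continuousAt.2 fun x =>
      Real.continuousAt_rpow_const x _ (Or.inr (by linarith))
  have hcont4 : Continuous fun t : ℝ => t ^ (4 * α - 1) :=
    continuous_iff_continuousAt.2 fun x =>
      Real.continuousAt_rpow_const x _ (Or.inr (by linarith))
  have hcont2 : Continuous fun t : ℝ => (1 - t) ^ δ := by
    have : Continuous fun u : ℝ => u ^ δ :=
      continuous_iff_continuousAt.2 fun x =>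
        Real.continuousAt_rpow_const x _ (Or.inr hδ0.le)
    exact this.comp (continuous_const.sub continuous_id)
  have hi1 : IntervalIntegrable (fun t => t ^ (2 * α - 1) * (1 - t) ^ δ) MeasureTheory.volume a b :=
    (hcont1.mul hcont2).intervalIntegrable a b
  have hi2 : IntervalIntegrable (fun t => c * t ^ (2 * α - 1) + d * t ^ (4 * α - 1))
      MeasureTheory.volume a b :=
    ((continuous_const.mul hcont1).add (continuous_const.mul hcont4)).intervalIntegrable a b
  have hmono := intervalIntegral.integral_mono_on hab.le hi1 hi2 hpt
  -- compute the RHS integral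
  have hint2 : (∫ t in a..b, (c * t ^ (2 * α - 1) + d * t ^ (4 * α - 1)))
      = c * ((B - A) / (2 * α)) + d * ((b ^ (4 * α) - a ^ (4 * α)) / (4 * α)) := by
    rw [intervalIntegral.integral_add (f := fun t => c * t ^ (2 * α - 1))
      (g := fun t => d * t ^ (4 * α - 1)) ((continuous_const.mul hcont1).intervalIntegrable a b)
      ((continuous_const.mul hcont4).intervalIntegrable a b),
      intervalIntegral.integral_const_mul, intervalIntegral.integral_const_mul,
      integral_rpow (Or.inl (by linarith)), integral_rpow (Or.inl (by linarith))]
    rw [hAdef, hBdef]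
    norm_num
  have hsq : ∀ t : ℝ, 0 ≤ t → t ^ (4 * α) = (t ^ (2 * α)) ^ (2:ℕ) := by
    intro t ht
    rw [← Real.rpow_natCast (t ^ (2 * α)) 2, ← Real.rpow_mul ht]
    norm_num
    ring_nf
  have hsqb : b ^ (4 * α) = B ^ (2:ℕ) := by rw [hsq b hb0.le, hBdef]
  have hsqa : a ^ (4 * α) = A ^ (2:ℕ) := by rw [hsq a ha, hAdef]
  have hd : d * (B - A) = Q - P := div_mul_cancel₀ _ hBA.ne'
  have hfinal : α * (c * ((B - A) / (2 * α)) + d * ((b ^ (4 * α) - a ^ (4 * α)) / (4 * α)))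
      = (B - A) / 4 * (P + Q) := by
    rw [hsqb, hsqa, hcdef, hddef]
    field_simp
    ring
  calc α * ∫ t in a..b, t ^ (2 * α - 1) * (1 - t) ^ δ
      ≤ α * ∫ t in a..b, (c * t ^ (2 * α - 1) + d * t ^ (4 * α - 1)) :=
        mul_le_mul_of_nonneg_left hmono hα0.le
    _ = (B - A) / 4 * (P + Q) := by rw [hint2, hfinal]
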